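/- The value of the integral I = (1/16)·∫_{[0,4]²} 1{|t|₄ ≤ 1}·1{|s|₄ ≤ 1}·1{|t−s|₄ ≤ 1} dt ds equals 3/16, where |x|₄ = min(|x|, 4 − |x|) is the periodic distance on [0,4]. -/

import Mathlib

open MeasureTheory

/-- The periodic distance `|x|₄ = min(|x|, 4 − |x|)` on the circle of circumference
`4`, for `x ∈ [−4, 4]`. -/
noncomputable def pd4 (x : ℝ) : ℝ := min |x| (4 - |x|)

lemma pd4_le_one (x : ℝ) : pd4 x ≤ 1 ↔ |x| ≤ 1 ∨ 3 ≤ |x| := by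
  unfold pd4
  rw [min_le_iff]
  constructor
  · rintro (h | h)
    · exact Or.inl h
    · exact Or.inr (by linarith)
  · rintro (h | h)
    · exact Or.inl h
    · exact Or.inr (by linarith)

lemma ind_integrableOn (a b : ℝ) :
    IntegrableOn (fun s => if s ∈ Set.Icc a b then (1:ℝ) else 0) (Set.Icc (0:ℝ) 4) := by
  have h : (fun s => if s ∈ Set.Icc a b then (1:ℝ) else 0)
      = Set.indicator (Set.Icc a b) (fun _ => (1:ℝ)) := by
    ext s; simp [Set.indicator_apply]
  rw [h]
  exact (integrableOn_const (by simp [Real.volume_Icc]) (by simp)).indicator measurableSet_Icc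

lemma ind_integral (a b : ℝ) (hab : a ≤ b) (ha : 0 ≤ a) (hb : b ≤ 4) :
    ∫ s in Set.Icc (0:ℝ) 4, (if s ∈ Set.Icc a b then (1:ℝ) else 0) = b - a := by
  have h : (fun s => if s ∈ Set.Icc a b then (1:ℝ) else 0)
      = Set.indicator (Set.Icc a b) (fun _ => (1:ℝ)) := by
    ext s; simp [Set.indicator_apply]
  rw [h, setIntegral_indicator measurableSet_Icc]
  have h2 : Set.Icc (0:ℝ) 4 ∩ Set.Icc a b = Set.Icc a b := by
    rw [Set.inter_eq_right]
    exact Set.Icc_subset_Icc ha hb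
  rw [h2]
  simp [Real.volume_Icc, ENNReal.toReal_ofReal (by linarith : (0:ℝ) ≤ b - a)]
  exact hab

lemma inner_left {t : ℝ} (ht0 : 0 ≤ t) (ht1 : t ≤ 1) :
    ∫ s in Set.Icc (0:ℝ) 4,
      (if pd4 t ≤ 1 then (1:ℝ) else 0) * (if pd4 s ≤ 1 then (1:ℝ) else 0) *
        (if pd4 (t - s) ≤ 1 then (1:ℝ) else 0) = 2 - t := by
  have hpt : pd4 t ≤ 1 := (pd4_le_one t).2 (Or.inl (by rw [abs_of_nonneg ht0]; exact ht1))
  have hEq : Set.EqOn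
      (fun s => (if pd4 t ≤ 1 then (1:ℝ) else 0) * (if pd4 s ≤ 1 then (1:ℝ) else 0) *
        (if pd4 (t - s) ≤ 1 then (1:ℝ) else 0))
      (fun s => (if s ∈ Set.Icc (0:ℝ) 1 then (1:ℝ) else 0) +
        (if s ∈ Set.Icc (t+3) 4 then (1:ℝ) else 0)) (Set.Icc (0:ℝ) 4) := by
    intro s hs
    obtain ⟨hs0, hs4⟩ := hs
    simp only [if_pos hpt, one_mul, Set.mem_Icc]
    rcases le_or_gt s 1 with hs1 | hs1
    · have h1 : pd4 s ≤ 1 := (pd4_le_one s).2 (Or.inl (by rw [abs_of_nonneg hs0]; exact hs1))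
      have h2 : pd4 (t - s) ≤ 1 := (pd4_le_one _).2 (Or.inl (abs_le.2 ⟨by linarith, by linarith⟩))
      rw [if_pos h1, if_pos h2,
        if_pos (show (0:ℝ) ≤ s ∧ s ≤ 1 from ⟨hs0, hs1⟩),
        if_neg (show ¬(t + 3 ≤ s ∧ s ≤ 4) by rintro ⟨h, _⟩; linarith)]
      norm_num
    · rcases lt_or_ge s 3 with hs3 | hs3
      · have h1 : ¬ pd4 s ≤ 1 := by
          rw [pd4_le_one, abs_of_nonneg hs0]; push_neg
          exact ⟨by linarith, by linarith⟩
        rw [if_neg h1, zero_mul,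
          if_neg (show ¬((0:ℝ) ≤ s ∧ s ≤ 1) by rintro ⟨_, h⟩; linarith),
          if_neg (show ¬(t + 3 ≤ s ∧ s ≤ 4) by rintro ⟨h, _⟩; linarith)]
        norm_num
      · have h1 : pd4 s ≤ 1 := (pd4_le_one s).2 (Or.inr (by rw [abs_of_nonneg hs0]; exact hs3))
        have habs : |t - s| = s - t := by rw [abs_sub_comm, abs_of_nonneg (by linarith)]
        rw [if_pos h1, one_mul]
        rcases le_or_gt (t + 3) s with h | h
        · have h2 : pd4 (t - s) ≤ 1 := (pd4_le_one _).2 (Or.inr (by rw [habs]; linarith))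
          rw [if_pos h2,
            if_neg (show ¬((0:ℝ) ≤ s ∧ s ≤ 1) by rintro ⟨_, h'⟩; linarith),
            if_pos (show t + 3 ≤ s ∧ s ≤ 4 from ⟨h, hs4⟩)]
          norm_num
        · have h2 : ¬ pd4 (t - s) ≤ 1 := by
            rw [pd4_le_one, habs]; push_neg
            exact ⟨by linarith, by linarith⟩
          rw [if_neg h2,
            if_neg (show ¬((0:ℝ) ≤ s ∧ s ≤ 1) by rintro ⟨_, h'⟩; linarith),
            if_neg (show ¬(t + 3 ≤ s ∧ s ≤ 4) by rintro ⟨h', _⟩; linarith)]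
          norm_num
  rw [setIntegral_congr_fun measurableSet_Icc hEq,
    integral_add (ind_integrableOn 0 1) (ind_integrableOn (t+3) 4),
    ind_integral 0 1 (by norm_num) le_rfl (by norm_num),
    ind_integral (t+3) 4 (by linarith) (by linarith) le_rfl]
  ring

lemma inner_right {t : ℝ} (ht0 : 3 ≤ t) (ht1 : t ≤ 4) :
    ∫ s in Set.Icc (0:ℝ) 4,
      (if pd4 t ≤ 1 then (1:ℝ) else 0) * (if pd4 s ≤ 1 then (1:ℝ) else 0) *
        (if pd4 (t - s) ≤ 1 then (1:ℝ) else 0) = t - 2 := by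
  have hpt : pd4 t ≤ 1 := (pd4_le_one t).2 (Or.inr (by rw [abs_of_nonneg (by linarith)]; exact ht0))
  have hEq : Set.EqOn
      (fun s => (if pd4 t ≤ 1 then (1:ℝ) else 0) * (if pd4 s ≤ 1 then (1:ℝ) else 0) *
        (if pd4 (t - s) ≤ 1 then (1:ℝ) else 0))
      (fun s => (if s ∈ Set.Icc (0:ℝ) (t-3) then (1:ℝ) else 0) +
        (if s ∈ Set.Icc (3:ℝ) 4 then (1:ℝ) else 0)) (Set.Icc (0:ℝ) 4) := by
    intro s hs
    obtain ⟨hs0, hs4⟩ := hs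
    simp only [if_pos hpt, one_mul, Set.mem_Icc]
    rcases le_or_gt s 1 with hs1 | hs1
    · have h1 : pd4 s ≤ 1 := (pd4_le_one s).2 (Or.inl (by rw [abs_of_nonneg hs0]; exact hs1))
      have habs : |t - s| = t - s := abs_of_nonneg (by linarith)
      rw [if_pos h1, one_mul,
        if_neg (show ¬((3:ℝ) ≤ s ∧ s ≤ 4) by rintro ⟨h, _⟩; linarith)]
      rcases le_or_gt s (t - 3) with h | h
      · rw [if_pos ((pd4_le_one _).2 (Or.inr (by rw [habs]; linarith))),
          if_pos (show (0:ℝ) ≤ s ∧ s ≤ t - 3 from ⟨hs0, h⟩)]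
        norm_num
      · have h2 : ¬ pd4 (t - s) ≤ 1 := by
          rw [pd4_le_one, habs]; push_neg
          exact ⟨by linarith, by linarith⟩
        rw [if_neg h2,
          if_neg (show ¬((0:ℝ) ≤ s ∧ s ≤ t - 3) by rintro ⟨_, h'⟩; linarith)]
        norm_num
    · rcases lt_or_ge s 3 with hs3 | hs3
      · have h1 : ¬ pd4 s ≤ 1 := by
          rw [pd4_le_one, abs_of_nonneg hs0]; push_neg
          exact ⟨by linarith, by linarith⟩
        rw [if_neg h1, zero_mul,
          if_neg (show ¬((0:ℝ) ≤ s ∧ s ≤ t - 3) by rintro ⟨_, h⟩; linarith),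
          if_neg (show ¬((3:ℝ) ≤ s ∧ s ≤ 4) by rintro ⟨h, _⟩; linarith)]
        norm_num
      · have h1 : pd4 s ≤ 1 := (pd4_le_one s).2 (Or.inr (by rw [abs_of_nonneg hs0]; exact hs3))
        have h2 : pd4 (t - s) ≤ 1 := (pd4_le_one _).2 (Or.inl (abs_le.2 ⟨by linarith, by linarith⟩))
        rw [if_pos h1, if_pos h2,
          if_neg (show ¬((0:ℝ) ≤ s ∧ s ≤ t - 3) by rintro ⟨_, h⟩; linarith),
          if_pos (show (3:ℝ) ≤ s ∧ s ≤ 4 from ⟨hs3, hs4⟩)]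
        norm_num
  rw [setIntegral_congr_fun measurableSet_Icc hEq,
    integral_add (ind_integrableOn 0 (t-3)) (ind_integrableOn 3 4),
    ind_integral 0 (t-3) (by linarith) le_rfl (by linarith),
    ind_integral 3 4 (by norm_num) (by norm_num) le_rfl]
  ring

lemma inner_mid {t : ℝ} (ht : ¬ pd4 t ≤ 1) :
    ∫ s in Set.Icc (0:ℝ) 4,
      (if pd4 t ≤ 1 then (1:ℝ) else 0) * (if pd4 s ≤ 1 then (1:ℝ) else 0) *
        (if pd4 (t - s) ≤ 1 then (1:ℝ) else 0) = 0 := by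
  simp [if_neg ht]

lemma poly_integrableOn (f : ℝ → ℝ) (hf : Continuous f) (a b : ℝ) :
    IntegrableOn (fun t => if t ∈ Set.Icc a b then f t else 0) (Set.Icc (0:ℝ) 4) := by
  have h : (fun t => if t ∈ Set.Icc a b then f t else 0)
      = Set.indicator (Set.Icc a b) f := by
    ext t; simp [Set.indicator_apply]
  rw [h]
  exact (hf.integrableOn_Icc).indicator measurableSet_Icc

lemma poly_integral (f : ℝ → ℝ) (hf : Continuous f) (a b : ℝ) (hab : a ≤ b)
    (ha : 0 ≤ a) (hb : b ≤ 4) :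
    ∫ t in Set.Icc (0:ℝ) 4, (if t ∈ Set.Icc a b then f t else 0)
      = ∫ t in Set.Icc a b, f t := by
  have h : (fun t => if t ∈ Set.Icc a b then f t else 0)
      = Set.indicator (Set.Icc a b) f := by
    ext t; simp [Set.indicator_apply]
  rw [h, setIntegral_indicator measurableSet_Icc]
  have h2 : Set.Icc (0:ℝ) 4 ∩ Set.Icc a b = Set.Icc a b := by
    rw [Set.inter_eq_right]
    exact Set.Icc_subset_Icc ha hb
  rw [h2]

/-- `(1/16)·∫_{[0,4]²} 1{|t|₄ ≤ 1}·1{|s|₄ ≤ 1}·1{|t−s|₄ ≤ 1} dt ds = 3/16`. -/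
theorem quarter_torus_triangle_integral :
    (1 / 16 : ℝ) *
      (∫ t in Set.Icc (0 : ℝ) 4, ∫ s in Set.Icc (0 : ℝ) 4,
        (if pd4 t ≤ 1 then (1 : ℝ) else 0) * (if pd4 s ≤ 1 then (1 : ℝ) else 0) *
          (if pd4 (t - s) ≤ 1 then (1 : ℝ) else 0)) = 3 / 16 := by
  have hEq : Set.EqOn
      (fun t => ∫ s in Set.Icc (0:ℝ) 4,
        (if pd4 t ≤ 1 then (1:ℝ) else 0) * (if pd4 s ≤ 1 then (1:ℝ) else 0) *
          (if pd4 (t - s) ≤ 1 then (1:ℝ) else 0))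
      (fun t => (if t ∈ Set.Icc (0:ℝ) 1 then (2 - t) else 0) +
        (if t ∈ Set.Icc (3:ℝ) 4 then (t - 2) else 0)) (Set.Icc (0:ℝ) 4) := by
    intro t ht
    obtain ⟨ht0, ht4⟩ := ht
    simp only [Set.mem_Icc]
    rcases le_or_gt t 1 with h1 | h1
    · rw [inner_left ht0 h1,
        if_pos (show (0:ℝ) ≤ t ∧ t ≤ 1 from ⟨ht0, h1⟩),
        if_neg (show ¬((3:ℝ) ≤ t ∧ t ≤ 4) by rintro ⟨h, _⟩; linarith)]
      ring
    · rcases lt_or_ge t 3 with h3 | h3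
      · have hpd : ¬ pd4 t ≤ 1 := by
          rw [pd4_le_one, abs_of_nonneg ht0]; push_neg
          exact ⟨by linarith, by linarith⟩
        rw [inner_mid hpd,
          if_neg (show ¬((0:ℝ) ≤ t ∧ t ≤ 1) by rintro ⟨_, h⟩; linarith),
          if_neg (show ¬((3:ℝ) ≤ t ∧ t ≤ 4) by rintro ⟨h, _⟩; linarith)]
        norm_num
      · rw [inner_right h3 ht4,
          if_neg (show ¬((0:ℝ) ≤ t ∧ t ≤ 1) by rintro ⟨_, h⟩; linarith),
          if_pos (show (3:ℝ) ≤ t ∧ t ≤ 4 from ⟨h3, ht4⟩)]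
        ring
  rw [setIntegral_congr_fun measurableSet_Icc hEq,
    integral_add (poly_integrableOn _ (by continuity) 0 1) (poly_integrableOn _ (by continuity) 3 4),
    poly_integral _ (by continuity) 0 1 (by norm_num) le_rfl (by norm_num),
    poly_integral _ (by continuity) 3 4 (by norm_num) (by norm_num) le_rfl]
  have h1 : ∫ t in Set.Icc (0:ℝ) 1, (2 - t) = 3/2 := by
    rw [integral_Icc_eq_integral_Ioc, ← intervalIntegral.integral_of_le (by norm_num : (0:ℝ) ≤ 1),
      intervalIntegral.integral_sub intervalIntegrable_const intervalIntegral.intervalIntegrable_id]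
    simp
    norm_num
  have h2 : ∫ t in Set.Icc (3:ℝ) 4, (t - 2) = 3/2 := by
    rw [integral_Icc_eq_integral_Ioc, ← intervalIntegral.integral_of_le (by norm_num : (3:ℝ) ≤ 4),
      intervalIntegral.integral_sub intervalIntegral.intervalIntegrable_id intervalIntegrable_const]
    simp
    norm_num
  rw [h1, h2]
  norm_num
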